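/- The 4-dimensional Lie algebra L_{J⊥} with brackets [H,E]=E, [H,A]=A, [H,B]=0, [A,B]=E, [E,A]=0, [E,B]=ξE (for a fixed nonzero scalar ξ) is a Frobenius Lie algebra. -/

import Mathlib

/- STATEMENT 4: The Lie algebra L_{J⊥} with basis {H,A,B,E} = {b 0,b 1,b 2,b 3} and
nonzero brackets [H,E]=E, [H,A]=A, [A,B]=E, [E,B]=ξE (ξ ≠ 0) is Frobenius. -/

theorem stmt4 {K : Type} [Field K] [CharZero K] {L : Type} [LieRing L] [LieAlgebra K L]
    (ξ : K) (hξ : ξ ≠ 0) (b : Module.Basis (Fin 4) K L)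
    (hHA : ⁅b 0, b 1⁆ = b 1) (hHB : ⁅b 0, b 2⁆ = 0) (hHE : ⁅b 0, b 3⁆ = b 3)
    (hAB : ⁅b 1, b 2⁆ = b 3) (hEA : ⁅b 3, b 1⁆ = 0) (hEB : ⁅b 3, b 2⁆ = ξ • b 3) :
    ∃ f : L →ₗ[K] K, ∀ x : L, (∀ y : L, f ⁅x, y⁆ = 0) → x = 0 := by
  refine ⟨b.coord 3, fun x hx => ?_⟩
  have hAH : ⁅b 1, b 0⁆ = -(b 1) := by rw [← lie_skew, hHA]
  have hBH : ⁅b 2, b 0⁆ = 0 := by rw [← lie_skew, hHB, neg_zero]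
  have hEH : ⁅b 3, b 0⁆ = -(b 3) := by rw [← lie_skew, hHE]
  have hBA : ⁅b 2, b 1⁆ = -(b 3) := by rw [← lie_skew, hAB]
  have hAE : ⁅b 1, b 3⁆ = 0 := by rw [← lie_skew, hEA, neg_zero]
  have hBE : ⁅b 2, b 3⁆ = -(ξ • b 3) := by rw [← lie_skew, hEB]
  set c : Fin 4 → K := fun i => b.repr x i with hc
  have hrep : x = c 0 • b 0 + c 1 • b 1 + c 2 • b 2 + c 3 • b 3 := by
    have h := b.sum_repr x
    rw [Fin.sum_univ_four] at h
    exact h.symm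
  have e0 := hx (b 0)
  have e1 := hx (b 1)
  have e2 := hx (b 2)
  have e3 := hx (b 3)
  rw [hrep] at e0 e1 e2 e3
  simp only [add_lie, smul_lie, lie_self, smul_zero, hHA, hHB, hHE, hAB, hEA, hEB,
    hAH, hBH, hEH, hBA, hAE, hBE, smul_neg, smul_smul, Module.Basis.coord_apply, map_add,
    map_neg, map_smul, Module.Basis.repr_self, add_zero, zero_add, neg_zero,
    Finsupp.coe_add, Finsupp.coe_neg, Finsupp.coe_smul, Pi.add_apply, Pi.neg_apply,
    Pi.smul_apply, Finsupp.single_apply, map_zero, Finsupp.coe_zero, Pi.zero_apply] at e0 e1 e2 e3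
  norm_num at e0 e1 e2 e3
  -- e0 : c 3 = 0 (up to sign), e1 : c 2 = 0, etc.
  have h3 : c 3 = 0 := by
    simpa using e0
  have h2 : c 2 = 0 := by
    simpa using e1
  have h1 : c 1 = 0 := by
    simp [h3] at e2; simpa using e2
  have h0 : c 0 = 0 := by
    simp [h2] at e3; simpa using e3
  rw [hrep, h0, h1, h2, h3]
  simp
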